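/- For every real number s ≥ 0, every real r > 0 and all polynomials p, q ∈ ℂ[x], the prenorm ‖·‖_{r,s} is submultiplicative: ‖p·q‖_{r,s} ≤ ‖p‖_{r,s} · ‖q‖_{r,s}. -/

import Mathlib

/-- The prenorm `‖p‖_{r,s} = Σ_n |a_n| rⁿ/(n!)^s` on `ℂ[x]`
(with `(n!)^s` a real power). -/
noncomputable def pnorm (r s : ℝ) (p : Polynomial ℂ) : ℝ :=
  ∑ n ∈ p.support, ‖p.coeff n‖ * r ^ n / (n.factorial : ℝ) ^ s

/-- For `s ≥ 0` and `r > 0`, the prenorm `‖·‖_{r,s}` is submultiplicative on `ℂ[x]`. -/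
theorem pnorm_mul_le (s : ℝ) (hs : 0 ≤ s) (r : ℝ) (hr : 0 < r) (p q : Polynomial ℂ) :
    pnorm r s (p * q) ≤ pnorm r s p * pnorm r s q := by
  classical
  set N := p.natDegree + q.natDegree with hN
  -- extend the support sum to a range sum
  have hsum : ∀ (f : Polynomial ℂ), f.support ⊆ Finset.range (N + 1) →
      pnorm r s f
        = ∑ n ∈ Finset.range (N + 1),
            ‖f.coeff n‖ * r ^ n / (n.factorial : ℝ) ^ s := by
    intro f hsub
    refine Finset.sum_subset hsub (fun n _ hn => ?_)
    simp [Polynomial.notMem_support_iff.mp hn]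
  have hfac : ∀ n : ℕ, (0 : ℝ) < (n.factorial : ℝ) ^ s := fun n =>
    Real.rpow_pos_of_pos (by exact_mod_cast n.factorial_pos) s
  -- the pairwise terms
  set G : ℕ × ℕ → ℝ := fun ij =>
    (‖p.coeff ij.1‖ * r ^ ij.1 / (ij.1.factorial : ℝ) ^ s) *
    (‖q.coeff ij.2‖ * r ^ ij.2 / (ij.2.factorial : ℝ) ^ s) with hG
  have hGnonneg : ∀ ij : ℕ × ℕ, 0 ≤ G ij := by
    intro ij
    have := hr.le
    positivity
  have hp : p.support ⊆ Finset.range (N + 1) := fun n hn =>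
    Finset.mem_range.2 (by have := Polynomial.le_natDegree_of_mem_supp n hn; omega)
  have hq : q.support ⊆ Finset.range (N + 1) := fun n hn =>
    Finset.mem_range.2 (by have := Polynomial.le_natDegree_of_mem_supp n hn; omega)
  have hpq : (p * q).support ⊆ Finset.range (N + 1) := fun n hn =>
    Finset.mem_range.2 (by
      have h1 := Polynomial.le_natDegree_of_mem_supp n hn
      have h2 := Polynomial.natDegree_mul_le (p := p) (q := q)
      omega)
  rw [hsum _ hpq, hsum _ hp, hsum _ hq, Finset.sum_mul_sum, ← Finset.sum_product']
  -- termwise bound: coefficient of product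
  have step1 : ∀ n ∈ Finset.range (N + 1),
      ‖(p * q).coeff n‖ * r ^ n / (n.factorial : ℝ) ^ s
        ≤ ∑ ij ∈ Finset.HasAntidiagonal.antidiagonal n, G ij := by
    intro n _
    have hcoeff : ‖(p * q).coeff n‖
        ≤ ∑ ij ∈ Finset.HasAntidiagonal.antidiagonal n, ‖p.coeff ij.1‖ * ‖q.coeff ij.2‖ := by
      rw [Polynomial.coeff_mul]
      refine (norm_sum_le _ _).trans ?_
      exact le_of_eq (Finset.sum_congr rfl fun ij _ => norm_mul _ _)
    calc ‖(p * q).coeff n‖ * r ^ n / (n.factorial : ℝ) ^ s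
        ≤ (∑ ij ∈ Finset.HasAntidiagonal.antidiagonal n,
            ‖p.coeff ij.1‖ * ‖q.coeff ij.2‖) * r ^ n
            / (n.factorial : ℝ) ^ s := by
          gcongr
      _ = ∑ ij ∈ Finset.HasAntidiagonal.antidiagonal n,
            ‖p.coeff ij.1‖ * ‖q.coeff ij.2‖ * r ^ n
              / (n.factorial : ℝ) ^ s := by
          rw [Finset.sum_mul, Finset.sum_div]
      _ ≤ ∑ ij ∈ Finset.HasAntidiagonal.antidiagonal n, G ij := by
          refine Finset.sum_le_sum fun ij hij => ?_
          have hn : ij.1 + ij.2 = n := Finset.HasAntidiagonal.mem_antidiagonal.mp hij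
          have hfacle : (ij.1.factorial : ℝ) ^ s * (ij.2.factorial : ℝ) ^ s
              ≤ (n.factorial : ℝ) ^ s := by
            rw [← Real.mul_rpow (by positivity) (by positivity)]
            refine Real.rpow_le_rpow (by positivity) ?_ hs
            have := Nat.factorial_mul_factorial_dvd_factorial_add ij.1 ij.2
            rw [hn] at this
            exact_mod_cast Nat.le_of_dvd n.factorial_pos this
          have : ‖p.coeff ij.1‖ * ‖q.coeff ij.2‖ * r ^ n
              / (n.factorial : ℝ) ^ s
              ≤ ‖p.coeff ij.1‖ * ‖q.coeff ij.2‖ * r ^ n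
              / ((ij.1.factorial : ℝ) ^ s * (ij.2.factorial : ℝ) ^ s) := by
            have h1 : (0:ℝ) < (ij.1.factorial : ℝ) ^ s * (ij.2.factorial : ℝ) ^ s :=
              mul_pos (hfac _) (hfac _)
            have hnum : 0 ≤ ‖p.coeff ij.1‖ * ‖q.coeff ij.2‖ * r ^ n := by
              have := hr.le; positivity
            exact div_le_div_of_nonneg_left hnum h1 hfacle
          refine this.trans (le_of_eq ?_)
          simp only [hG, ← hn, pow_add]
          field_simp
  refine (Finset.sum_le_sum step1).trans ?_
  -- regroup the antidiagonal sums into the product grid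
  have hdisj : (↑(Finset.range (N + 1) : Finset ℕ) : Set ℕ).PairwiseDisjoint
      Finset.HasAntidiagonal.antidiagonal := by
    intro a _ b _ hab
    refine Finset.disjoint_left.2 fun ij hia hib => ?_
    have := Finset.HasAntidiagonal.mem_antidiagonal.mp hia
    have := Finset.HasAntidiagonal.mem_antidiagonal.mp hib
    omega
  rw [← Finset.sum_biUnion hdisj]
  refine Finset.sum_le_sum_of_subset_of_nonneg ?_ (fun ij _ _ => hGnonneg ij)
  intro ij hij
  rcases Finset.mem_biUnion.mp hij with ⟨n, hn, hijn⟩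
  have hn' := Finset.mem_range.mp hn
  have hsumn := Finset.HasAntidiagonal.mem_antidiagonal.mp hijn
  exact Finset.mem_product.2 ⟨Finset.mem_range.2 (by omega), Finset.mem_range.2 (by omega)⟩
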